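/- Let a, b, c, γ, β, ψ ∈ ℝ with a ≠ 0, β > 0, ψ > 0, and set E = e^{2πγ/β}. For (ε₁, ε₃) ∈ ℝ² define Y(ε₁,ε₃) = (−aψ/(a²+b²) + ε₁, −bψ/(a²+b²) + (b/a)ε₁ − (cγ/(aβ))ε₃, ε₃) ∈ ℝ³, let φ_t(Y) = (cos(βt) Y₁ + sin(βt) Y₂, −sin(βt) Y₁ + cos(βt) Y₂, e^{γt} Y₃), and let C(ε₁,ε₃,t) = −bβ (φ_t(Y(ε₁,ε₃)))₁ + aβ (φ_t(Y(ε₁,ε₃)))₂ + cγ (φ_t(Y(ε₁,ε₃)))₃. Then there exist an open neighbourhood U of (0,0) in ℝ² and a C¹ function T : U → ℝ such that: T(0,0) = 2π/β; C(ε₁,ε₃,T(ε₁,ε₃)) = 0 for all (ε₁,ε₃) ∈ U; the gradient of T at (0,0) equals (0, cγ(1−E)/(β²ψ)); and the map R(ε₁,ε₃) = ((φ_{T(ε₁,ε₃)}(Y(ε₁,ε₃)))₁ + aψ/(a²+b²), (φ_{T(ε₁,ε₃)}(Y(ε₁,ε₃)))₃) is differentiable at (0,0) with Jacobian matrix having rows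 (1, −bcγ(1−E)/((a²+b²)β)) and (0, E). -/

import Mathlib

set_option maxHeartbeats 1000000 in
/-- The derivative of the global return map of the blown-up Filippov system at a
boundary Hopf bifurcation: there is a `C¹` return time `T` to the cross-section,
with the stated value, gradient, and the stated Jacobian of the return map. -/
theorem stmt_6 (a b c γ β ψ : ℝ) (ha : a ≠ 0) (hβ : 0 < β) (hψ : 0 < ψ)
    (E : ℝ) (hE : E = Real.exp (2 * Real.pi * γ / β))
    (Y : ℝ × ℝ → Fin 3 → ℝ)
    (hY : Y = fun ε => ![-a * ψ / (a ^ 2 + b ^ 2) + ε.1,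
        -b * ψ / (a ^ 2 + b ^ 2) + (b / a) * ε.1 - (c * γ / (a * β)) * ε.2,
        ε.2])
    (φ : ℝ → (Fin 3 → ℝ) → Fin 3 → ℝ)
    (hφ : φ = fun t Z => ![Real.cos (β * t) * Z 0 + Real.sin (β * t) * Z 1,
        -Real.sin (β * t) * Z 0 + Real.cos (β * t) * Z 1,
        Real.exp (γ * t) * Z 2])
    (C : ℝ × ℝ → ℝ → ℝ)
    (hC : C = fun ε t =>
      -b * β * φ t (Y ε) 0 + a * β * φ t (Y ε) 1 + c * γ * φ t (Y ε) 2) :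
    ∃ U : Set (ℝ × ℝ), IsOpen U ∧ (0, 0) ∈ U ∧
      ∃ T : ℝ × ℝ → ℝ, ContDiffOn ℝ 1 T U ∧
        T (0, 0) = 2 * Real.pi / β ∧
        (∀ ε ∈ U, C ε (T ε) = 0) ∧
        HasFDerivAt T
          ((c * γ * (1 - E) / (β ^ 2 * ψ)) • ContinuousLinearMap.snd ℝ ℝ ℝ) (0, 0) ∧
        HasFDerivAt
          (fun ε : ℝ × ℝ =>
            (φ (T ε) (Y ε) 0 + a * ψ / (a ^ 2 + b ^ 2), φ (T ε) (Y ε) 2))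
          ((ContinuousLinearMap.fst ℝ ℝ ℝ +
              (-b * c * γ * (1 - E) / ((a ^ 2 + b ^ 2) * β)) •
                ContinuousLinearMap.snd ℝ ℝ ℝ).prod
            (E • ContinuousLinearMap.snd ℝ ℝ ℝ)) (0, 0) := by
  have hb : β ≠ 0 := ne_of_gt hβ
  have hψ' : ψ ≠ 0 := ne_of_gt hψ
  have hden : a ^ 2 + b ^ 2 ≠ 0 := by positivity
  set t₀ : ℝ := 2 * Real.pi / β with ht₀def
  have hβt₀ : β * t₀ = 2 * Real.pi := by
    rw [ht₀def]; field_simp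
  have hsin : Real.sin (β * t₀) = 0 := by rw [hβt₀, Real.sin_two_pi]
  have hcos : Real.cos (β * t₀) = 1 := by rw [hβt₀, Real.cos_two_pi]
  have hexp : Real.exp (γ * t₀) = E := by
    rw [hE]; congr 1; rw [ht₀def]; field_simp
  -- explicit formula for C
  have hC' : ∀ ε t, C ε t =
      β * ψ * Real.sin (β * t)
      - (β * (a ^ 2 + b ^ 2) / a) * Real.sin (β * t) * ε.1
      + (b * c * γ / a) * Real.sin (β * t) * ε.2
      + c * γ * (Real.exp (γ * t) - Real.cos (β * t)) * ε.2 := by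
    intro ε t
    simp only [hC, hφ, hY, Matrix.cons_val_zero, Matrix.cons_val_one, Matrix.head_cons,
      Matrix.cons_val_two, Matrix.tail_cons]
    field_simp
    ring
  -- some continuous linear maps
  set fst2 : ℝ × ℝ →L[ℝ] ℝ := ContinuousLinearMap.fst ℝ ℝ ℝ with hfst2
  set snd2 : ℝ × ℝ →L[ℝ] ℝ := ContinuousLinearMap.snd ℝ ℝ ℝ with hsnd2
  set pr1 : (ℝ × ℝ) × ℝ →L[ℝ] ℝ := fst2.comp (ContinuousLinearMap.fst ℝ (ℝ × ℝ) ℝ) with hpr1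
  set pr2 : (ℝ × ℝ) × ℝ →L[ℝ] ℝ := snd2.comp (ContinuousLinearMap.fst ℝ (ℝ × ℝ) ℝ) with hpr2
  set prt : (ℝ × ℝ) × ℝ →L[ℝ] ℝ := ContinuousLinearMap.snd ℝ (ℝ × ℝ) ℝ with hprt
  set p₀ : (ℝ × ℝ) × ℝ := ((0, 0), t₀) with hp₀
  set k : ℝ := c * γ * (E - 1) with hk
  set m : ℝ := β ^ 2 * ψ with hm
  have hmne : m ≠ 0 := by rw [hm]; positivity
  -- derivative of (ε, t) ↦ C ε t at p₀
  have hCfun : HasFDerivAt (fun p : (ℝ × ℝ) × ℝ => C p.1 p.2) (k • pr2 + m • prt) p₀ := by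
    have hmul : HasFDerivAt (fun p : (ℝ × ℝ) × ℝ => β * p.2) (β • prt) p₀ :=
      (hasFDerivAt_snd).const_mul β
    have hmulγ : HasFDerivAt (fun p : (ℝ × ℝ) × ℝ => γ * p.2) (γ • prt) p₀ :=
      (hasFDerivAt_snd).const_mul γ
    have hs : HasFDerivAt (fun p : (ℝ × ℝ) × ℝ => Real.sin (β * p.2))
        (Real.cos (β * t₀) • (β • prt)) p₀ :=
      by have := HasDerivAt.comp_hasFDerivAt p₀ (Real.hasDerivAt_sin (β * t₀)) hmul; exact this
    have hco : HasFDerivAt (fun p : (ℝ × ℝ) × ℝ => Real.cos (β * p.2))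
        ((-Real.sin (β * t₀)) • (β • prt)) p₀ :=
      by have := HasDerivAt.comp_hasFDerivAt p₀ (Real.hasDerivAt_cos (β * t₀)) hmul; exact this
    have he : HasFDerivAt (fun p : (ℝ × ℝ) × ℝ => Real.exp (γ * p.2))
        (Real.exp (γ * t₀) • (γ • prt)) p₀ :=
      by have := HasDerivAt.comp_hasFDerivAt p₀ (Real.hasDerivAt_exp (γ * t₀)) hmulγ; exact this
    have h11 : HasFDerivAt (fun p : (ℝ × ℝ) × ℝ => p.1.1) pr1 p₀ := pr1.hasFDerivAt
    have h12 : HasFDerivAt (fun p : (ℝ × ℝ) × ℝ => p.1.2) pr2 p₀ := pr2.hasFDerivAt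
    have H := ((((hs.const_mul (β * ψ)).sub
        (((hs.const_mul (β * (a ^ 2 + b ^ 2) / a))).mul h11)).add
        (((hs.const_mul (b * c * γ / a))).mul h12)).add
        (((he.sub hco).const_mul (c * γ)).mul h12))
    have heq : (fun p : (ℝ × ℝ) × ℝ => C p.1 p.2) =
        (fun p : (ℝ × ℝ) × ℝ =>
          β * ψ * Real.sin (β * p.2)
          - (β * (a ^ 2 + b ^ 2) / a) * Real.sin (β * p.2) * p.1.1
          + (b * c * γ / a) * Real.sin (β * p.2) * p.1.2
          + c * γ * (Real.exp (γ * p.2) - Real.cos (β * p.2)) * p.1.2) :=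
      funext fun p => hC' p.1 p.2
    rw [heq]
    refine H.congr_fderiv ?_
    refine ContinuousLinearMap.ext fun v => ?_
    simp only [hp₀, hk, hm, hsin, hcos, hexp, Pi.sub_apply, ContinuousLinearMap.add_apply,
      ContinuousLinearMap.sub_apply, ContinuousLinearMap.smul_apply, smul_eq_mul,
      hpr1, hpr2, hprt, ContinuousLinearMap.coe_comp', Function.comp_apply,
      ContinuousLinearMap.coe_fst', ContinuousLinearMap.coe_snd', hfst2, hsnd2]
    ring
  have hCsmooth : ContDiff ℝ 1 (fun p : (ℝ × ℝ) × ℝ => C p.1 p.2) := by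
    have heq : (fun p : (ℝ × ℝ) × ℝ => C p.1 p.2) =
        (fun p : (ℝ × ℝ) × ℝ =>
          β * ψ * Real.sin (β * p.2)
          - (β * (a ^ 2 + b ^ 2) / a) * Real.sin (β * p.2) * p.1.1
          + (b * c * γ / a) * Real.sin (β * p.2) * p.1.2
          + c * γ * (Real.exp (γ * p.2) - Real.cos (β * p.2)) * p.1.2) :=
      funext fun p => hC' p.1 p.2
    rw [heq]
    have hp2 : ContDiff ℝ 1 (fun p : (ℝ × ℝ) × ℝ => p.2) := contDiff_snd
    have h11 : ContDiff ℝ 1 (fun p : (ℝ × ℝ) × ℝ => p.1.1) := contDiff_fst.comp contDiff_fst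
    have h12 : ContDiff ℝ 1 (fun p : (ℝ × ℝ) × ℝ => p.1.2) := contDiff_snd.comp contDiff_fst
    have hsβ : ContDiff ℝ 1 (fun p : (ℝ × ℝ) × ℝ => Real.sin (β * p.2)) :=
      (contDiff_const.mul hp2).sin
    have hcβ : ContDiff ℝ 1 (fun p : (ℝ × ℝ) × ℝ => Real.cos (β * p.2)) :=
      (contDiff_const.mul hp2).cos
    have heγ : ContDiff ℝ 1 (fun p : (ℝ × ℝ) × ℝ => Real.exp (γ * p.2)) :=
      (contDiff_const.mul hp2).exp
    exact (((contDiff_const.mul hsβ).sub ((contDiff_const.mul hsβ).mul h11)).add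
      ((contDiff_const.mul hsβ).mul h12)).add ((contDiff_const.mul (heγ.sub hcβ)).mul h12)
  -- the map F and its invertible derivative
  set F : (ℝ × ℝ) × ℝ → (ℝ × ℝ) × ℝ := fun p => (p.1, C p.1 p.2) with hF
  set Lf : (ℝ × ℝ) × ℝ →L[ℝ] (ℝ × ℝ) × ℝ :=
    (ContinuousLinearMap.fst ℝ (ℝ × ℝ) ℝ).prod (k • pr2 + m • prt) with hLf
  set Lg : (ℝ × ℝ) × ℝ →L[ℝ] (ℝ × ℝ) × ℝ :=
    (ContinuousLinearMap.fst ℝ (ℝ × ℝ) ℝ).prod (m⁻¹ • (prt - k • pr2)) with hLg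
  have hLapp : ∀ x : (ℝ × ℝ) × ℝ, Lf x = (x.1, k * x.1.2 + m * x.2) := by
    intro x
    simp [hLf, hpr2, hprt, hsnd2]
  have hLgapp : ∀ x : (ℝ × ℝ) × ℝ, Lg x = (x.1, m⁻¹ * (x.2 - k * x.1.2)) := by
    intro x
    simp [hLg, hpr2, hprt, hsnd2]
  have hleft : Function.LeftInverse Lg Lf := by
    intro x
    rw [hLapp, hLgapp]
    refine Prod.ext rfl ?_
    show m⁻¹ * (k * x.1.2 + m * x.2 - k * x.1.2) = x.2
    field_simp
    ring
  have hright : Function.RightInverse Lg Lf := by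
    intro x
    rw [hLgapp, hLapp]
    refine Prod.ext rfl ?_
    show k * x.1.2 + m * (m⁻¹ * (x.2 - k * x.1.2)) = x.2
    field_simp
    ring
  set L : ((ℝ × ℝ) × ℝ) ≃L[ℝ] ((ℝ × ℝ) × ℝ) :=
    ContinuousLinearEquiv.equivOfInverse Lf Lg hleft hright with hL
  have hLcoe : (L : (ℝ × ℝ) × ℝ →L[ℝ] (ℝ × ℝ) × ℝ) = Lf := by
    refine ContinuousLinearMap.ext fun x => ?_
    rw [ContinuousLinearEquiv.coe_coe, hL, ContinuousLinearEquiv.equivOfInverse_apply]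
  have hFd : HasFDerivAt F (L : (ℝ × ℝ) × ℝ →L[ℝ] (ℝ × ℝ) × ℝ) p₀ := by
    rw [hLcoe]
    exact HasFDerivAt.prodMk hasFDerivAt_fst hCfun
  have hFcd : ContDiffAt ℝ 1 F p₀ := (contDiff_fst.prodMk hCsmooth).contDiffAt
  have hFst : HasStrictFDerivAt F (L : (ℝ × ℝ) × ℝ →L[ℝ] (ℝ × ℝ) × ℝ) p₀ :=
    hFcd.hasStrictFDerivAt' hFd one_ne_zero
  have hFp₀ : F p₀ = ((0, 0), 0) := by
    rw [hF]
    refine Prod.ext rfl ?_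
    simp only [hp₀]
    rw [hC' (0, 0) t₀]
    simp [hsin]
  set g : (ℝ × ℝ) × ℝ → (ℝ × ℝ) × ℝ := hFst.localInverse F L p₀ with hg
  have hgcd : ContDiffAt ℝ 1 g (((0, 0) : ℝ × ℝ), (0 : ℝ)) := by
    rw [← hFp₀]
    exact hFcd.to_localInverse hFd one_ne_zero
  have hgst : HasStrictFDerivAt g (L.symm : (ℝ × ℝ) × ℝ →L[ℝ] (ℝ × ℝ) × ℝ)
      (((0, 0) : ℝ × ℝ), (0 : ℝ)) := by
    rw [← hFp₀]; exact hFst.to_localInverse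
  have hri : ∀ᶠ y in nhds (((0, 0) : ℝ × ℝ), (0 : ℝ)), F (g y) = y := by
    rw [← hFp₀]; exact hFst.eventually_right_inverse
  obtain ⟨u, hu_mem, hu_cd⟩ := hgcd.contDiffOn le_rfl (by simp)
  have hmem : {y : (ℝ × ℝ) × ℝ | F (g y) = y} ∩ u ∈
      nhds (((0, 0) : ℝ × ℝ), (0 : ℝ)) := Filter.inter_mem hri hu_mem
  obtain ⟨V, hVsub, hVopen, hV0⟩ := mem_nhds_iff.mp hmem
  set T : ℝ × ℝ → ℝ := fun ε => (g (ε, 0)).2 with hT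
  set U : Set (ℝ × ℝ) := {ε : ℝ × ℝ | ((ε, (0 : ℝ)) : (ℝ × ℝ) × ℝ) ∈ V} with hU
  have hUopen : IsOpen U := hVopen.preimage (continuous_id.prodMk continuous_const)
  have hU0 : ((0, 0) : ℝ × ℝ) ∈ U := hV0
  have hg00 : g (((0, 0) : ℝ × ℝ), (0 : ℝ)) = p₀ := by
    rw [← hFp₀]; exact hFst.localInverse_apply_image
  have hT0 : T (0, 0) = t₀ := by rw [hT]; simp only; rw [hg00]
  -- right-inverse consequences on U
  have hUinv : ∀ ε ∈ U, (g (ε, (0 : ℝ))).1 = ε ∧ C (g (ε, (0 : ℝ))).1 (g (ε, (0 : ℝ))).2 = 0 := by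
    intro ε hε
    have h1 := (hVsub hε).1
    simp only [Set.mem_setOf_eq, hF] at h1
    exact ⟨congrArg Prod.fst h1, congrArg Prod.snd h1⟩
  have hCzero : ∀ ε ∈ U, C ε (T ε) = 0 := by
    intro ε hε
    obtain ⟨h1, h2⟩ := hUinv ε hε
    rw [h1] at h2
    exact h2
  -- ContDiffOn of T
  have hTcd : ContDiffOn ℝ 1 T U := by
    have hj : ContDiff ℝ 1 (fun ε : ℝ × ℝ => ((ε, (0 : ℝ)) : (ℝ × ℝ) × ℝ)) :=
      contDiff_id.prodMk contDiff_const
    have hcomp : ContDiffOn ℝ 1 (fun ε : ℝ × ℝ => g (ε, (0 : ℝ))) U := by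
      refine (hu_cd.comp hj.contDiffOn ?_)
      intro ε hε
      exact (hVsub hε).2
    exact contDiff_snd.comp_contDiffOn hcomp
  -- derivative of T
  set T' : ℝ × ℝ →L[ℝ] ℝ := (c * γ * (1 - E) / (β ^ 2 * ψ)) • snd2 with hT'
  have hTd : HasFDerivAt T T' ((0, 0) : ℝ × ℝ) := by
    have hinl : HasFDerivAt (fun ε : ℝ × ℝ => ((ε, (0 : ℝ)) : (ℝ × ℝ) × ℝ))
        (ContinuousLinearMap.inl ℝ (ℝ × ℝ) ℝ) ((0, 0) : ℝ × ℝ) :=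
      (ContinuousLinearMap.inl ℝ (ℝ × ℝ) ℝ).hasFDerivAt
    have hgj : HasFDerivAt (fun ε : ℝ × ℝ => g (ε, (0 : ℝ)))
        ((L.symm : (ℝ × ℝ) × ℝ →L[ℝ] (ℝ × ℝ) × ℝ).comp (ContinuousLinearMap.inl ℝ (ℝ × ℝ) ℝ))
        ((0, 0) : ℝ × ℝ) :=
      (hgst.hasFDerivAt).comp ((0, 0) : ℝ × ℝ) hinl
    have hsndg : HasFDerivAt T
        (prt.comp ((L.symm : (ℝ × ℝ) × ℝ →L[ℝ] (ℝ × ℝ) × ℝ).comp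
          (ContinuousLinearMap.inl ℝ (ℝ × ℝ) ℝ))) ((0, 0) : ℝ × ℝ) :=
      (prt.hasFDerivAt).comp ((0, 0) : ℝ × ℝ) hgj
    convert hsndg using 1
    refine ContinuousLinearMap.ext fun v => ?_
    have hLsymm : (L.symm : (ℝ × ℝ) × ℝ →L[ℝ] (ℝ × ℝ) × ℝ) ((v, (0 : ℝ)) : (ℝ × ℝ) × ℝ)
        = Lg ((v, (0 : ℝ)) : (ℝ × ℝ) × ℝ) := by
      rw [hL, ContinuousLinearEquiv.symm_equivOfInverse]
      rfl
    simp only [hT', ContinuousLinearMap.smul_apply, smul_eq_mul, hsnd2,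
      ContinuousLinearMap.coe_snd', ContinuousLinearMap.coe_comp', Function.comp_apply,
      ContinuousLinearMap.inl_apply, hprt]
    rw [hLsymm, hLgapp]
    simp only [hk, hm]
    field_simp
    ring
  refine ⟨U, hUopen, hU0, T, hTcd, hT0, hCzero, hTd, ?_⟩
  -- the return map derivative
  set G₁ : ℝ := -a * ψ / (a ^ 2 + b ^ 2) with hG₁
  set G₂ : ℝ := -b * ψ / (a ^ 2 + b ^ 2) with hG₂
  have hfun : (fun ε : ℝ × ℝ =>
      (φ (T ε) (Y ε) 0 + a * ψ / (a ^ 2 + b ^ 2), φ (T ε) (Y ε) 2)) =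
      (fun ε : ℝ × ℝ =>
        (Real.cos (β * T ε) * (G₁ + ε.1)
          + Real.sin (β * T ε) * (G₂ + (b / a) * ε.1 - (c * γ / (a * β)) * ε.2)
          + a * ψ / (a ^ 2 + b ^ 2),
         Real.exp (γ * T ε) * ε.2)) := by
    funext ε
    simp only [hφ, hY, Matrix.cons_val_zero, Matrix.cons_val_one, Matrix.head_cons,
      Matrix.cons_val_two, Matrix.tail_cons, hG₁, hG₂]
  rw [hfun]
  have hmulT : HasFDerivAt (fun ε : ℝ × ℝ => β * T ε) (β • T') ((0, 0) : ℝ × ℝ) :=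
    hTd.const_mul β
  have hmulTγ : HasFDerivAt (fun ε : ℝ × ℝ => γ * T ε) (γ • T') ((0, 0) : ℝ × ℝ) :=
    hTd.const_mul γ
  have hβT00 : β * T ((0, 0) : ℝ × ℝ) = β * t₀ := by rw [hT0]
  have hγT00 : γ * T ((0, 0) : ℝ × ℝ) = γ * t₀ := by rw [hT0]
  have hcosT : HasFDerivAt (fun ε : ℝ × ℝ => Real.cos (β * T ε))
      ((-Real.sin (β * t₀)) • (β • T')) ((0, 0) : ℝ × ℝ) := by
    have := (Real.hasDerivAt_cos (β * T ((0, 0) : ℝ × ℝ))).comp_hasFDerivAt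
      ((0, 0) : ℝ × ℝ) hmulT
    rwa [hβT00] at this
  have hsinT : HasFDerivAt (fun ε : ℝ × ℝ => Real.sin (β * T ε))
      ((Real.cos (β * t₀)) • (β • T')) ((0, 0) : ℝ × ℝ) := by
    have := (Real.hasDerivAt_sin (β * T ((0, 0) : ℝ × ℝ))).comp_hasFDerivAt
      ((0, 0) : ℝ × ℝ) hmulT
    rwa [hβT00] at this
  have hexpT : HasFDerivAt (fun ε : ℝ × ℝ => Real.exp (γ * T ε))
      ((Real.exp (γ * t₀)) • (γ • T')) ((0, 0) : ℝ × ℝ) := by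
    have := (Real.hasDerivAt_exp (γ * T ((0, 0) : ℝ × ℝ))).comp_hasFDerivAt
      ((0, 0) : ℝ × ℝ) hmulTγ
    rwa [hγT00] at this
  have hY0 : HasFDerivAt (fun ε : ℝ × ℝ => G₁ + ε.1) fst2 ((0, 0) : ℝ × ℝ) :=
    (hasFDerivAt_fst).const_add G₁
  have hY1 : HasFDerivAt (fun ε : ℝ × ℝ => G₂ + (b / a) * ε.1 - (c * γ / (a * β)) * ε.2)
      ((b / a) • fst2 - (c * γ / (a * β)) • snd2) ((0, 0) : ℝ × ℝ) := by
    exact (((hasFDerivAt_fst).const_mul (b / a)).const_add G₂).sub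
      ((hasFDerivAt_snd).const_mul (c * γ / (a * β)))
  have hsnd00 : HasFDerivAt (fun ε : ℝ × ℝ => ε.2) snd2 ((0, 0) : ℝ × ℝ) := hasFDerivAt_snd
  have H1 := ((hcosT.mul hY0).add (hsinT.mul hY1)).add_const (a * ψ / (a ^ 2 + b ^ 2))
  have H2 := hexpT.mul hsnd00
  have H1' : HasFDerivAt (fun ε : ℝ × ℝ =>
      Real.cos (β * T ε) * (G₁ + ε.1)
        + Real.sin (β * T ε) * (G₂ + (b / a) * ε.1 - (c * γ / (a * β)) * ε.2)
        + a * ψ / (a ^ 2 + b ^ 2))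
      (fst2 + (-b * c * γ * (1 - E) / ((a ^ 2 + b ^ 2) * β)) • snd2) ((0, 0) : ℝ × ℝ) := by
    refine H1.congr_fderiv ?_
    refine ContinuousLinearMap.ext fun v => ?_
    simp only [hT0, hsin, hcos, ContinuousLinearMap.add_apply, ContinuousLinearMap.sub_apply,
      ContinuousLinearMap.smul_apply, smul_eq_mul, hT', hfst2, hsnd2,
      ContinuousLinearMap.coe_fst', ContinuousLinearMap.coe_snd', hG₁, hG₂]
    field_simp
    ring
  have H2' : HasFDerivAt (fun ε : ℝ × ℝ => Real.exp (γ * T ε) * ε.2)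
      (E • snd2) ((0, 0) : ℝ × ℝ) := by
    refine H2.congr_fderiv ?_
    refine ContinuousLinearMap.ext fun v => ?_
    simp only [hT0, hexp, ContinuousLinearMap.add_apply, ContinuousLinearMap.smul_apply,
      smul_eq_mul, hT', hsnd2, ContinuousLinearMap.coe_snd']
    ring
  exact HasFDerivAt.prodMk H1' H2'
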